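/- arXiv:2211.00587 — 2 statements merged into one kernel-verified Lean document; each statement's English description precedes it below -/
import Mathlib

section
/- The index of the group (Γ(2)·⟨Y⟩)⁺ (the determinant-1 elements of Γ(2)·⟨Y⟩) in SL(2,ℤ) is exactly 3, with right-coset representatives Id, T = [[1,1],[0,1]], and TS = [[1,-1],[1,0]]. -/
open Matrix

/-- `Γ(2) ⊆ GL(2, ℤ)`: integer matrices of determinant `±1` with even off-diagonal entries. -/
def Gamma2Set : Set (GL (Fin 2) ℤ) :=
  {X | (2 : ℤ) ∣ (X : Matrix (Fin 2) (Fin 2) ℤ) 0 1 ∧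
       (2 : ℤ) ∣ (X : Matrix (Fin 2) (Fin 2) ℤ) 1 0}

/-- The swap matrix `Y = [[0,1],[1,0]]` as an element of `GL(2, ℤ)`. -/
def Ymat : GL (Fin 2) ℤ :=
  ⟨!![0, 1; 1, 0], !![0, 1; 1, 0], by decide, by decide⟩

/-- `(Γ(2)·⟨Y⟩)⁺`: the determinant-one elements of the group generated by `Γ(2)` and `Y`,
viewed as a subgroup of `SL(2, ℤ)`. -/
def Gamma2YPlus : Subgroup (Matrix.SpecialLinearGroup (Fin 2) ℤ) :=
  (Subgroup.closure (Gamma2Set ∪ {Ymat})).comap Matrix.SpecialLinearGroup.toGL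

/-- `S = [[0,-1],[1,0]]` in `SL(2, ℤ)`. -/
def Smat : Matrix.SpecialLinearGroup (Fin 2) ℤ :=
  ⟨!![0, -1; 1, 0], by norm_num [Matrix.det_fin_two_of]⟩

/-- `T = [[1,1],[0,1]]` in `SL(2, ℤ)`. -/
def Tmat : Matrix.SpecialLinearGroup (Fin 2) ℤ :=
  ⟨!![1, 1; 0, 1], by norm_num [Matrix.det_fin_two_of]⟩

/- ### Auxiliary material -/

/-- Reduction mod 2 on `GL(2, ℤ)`. -/
def psi2 : GL (Fin 2) ℤ →* GL (Fin 2) (ZMod 2) :=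
  Units.map (((Int.castRingHom (ZMod 2)).mapMatrix :
    Matrix (Fin 2) (Fin 2) ℤ →+* Matrix (Fin 2) (Fin 2) (ZMod 2)).toMonoidHom)

/-- The swap matrix over `ZMod 2`. -/
def Yg : GL (Fin 2) (ZMod 2) := ⟨!![0,1;1,0], !![0,1;1,0], by decide, by decide⟩

lemma psi2_coe (X : GL (Fin 2) ℤ) :
    (psi2 X : Matrix (Fin 2) (Fin 2) (ZMod 2)) =
      (X : Matrix (Fin 2) (Fin 2) ℤ).map (Int.cast : ℤ → ZMod 2) := by
  simp [psi2, RingHom.mapMatrix_apply]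

lemma mem_zpowers_iff_of_sq {G : Type*} [Group G] {g : G} (h : g * g = 1) (x : G) :
    x ∈ Subgroup.zpowers g ↔ x = 1 ∨ x = g := by
  constructor
  · rintro ⟨k, hk⟩
    have hk' : g ^ k = x := hk
    rw [← hk']
    have h2 : g ^ (2 : ℤ) = 1 := by
      rw [show (2:ℤ) = 1 + 1 by norm_num, _root_.zpow_add, zpow_one, h]
    have hk2 : g ^ k = g ^ (k % 2) := by
      conv_lhs => rw [← Int.mul_ediv_add_emod k 2]
      rw [_root_.zpow_add, _root_.zpow_mul, h2, _root_.one_zpow, one_mul]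
    rcases Int.emod_two_eq_zero_or_one k with h0 | h1
    · left; rw [hk2, h0, zpow_zero]
    · right; rw [hk2, h1, zpow_one]
  · rintro (rfl | rfl)
    · exact one_mem _
    · exact Subgroup.mem_zpowers _

lemma Yg_sq : Yg * Yg = 1 := by decide

lemma zmod2_mul_eq_one : ∀ a d : ZMod 2, a * d = 1 → a = 1 ∧ d = 1 := by decide

/-- An element of `Gamma2Set` reduces to the identity mod 2. -/
lemma psi2_of_gamma2 {X : GL (Fin 2) ℤ} (hX : X ∈ Gamma2Set) : psi2 X = 1 := by
  obtain ⟨hb, hc⟩ := hX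
  have hb0 : (((X : Matrix (Fin 2) (Fin 2) ℤ) 0 1 : ℤ) : ZMod 2) = 0 :=
    (ZMod.intCast_zmod_eq_zero_iff_dvd _ 2).mpr (by exact_mod_cast hb)
  have hc0 : (((X : Matrix (Fin 2) (Fin 2) ℤ) 1 0 : ℤ) : ZMod 2) = 0 :=
    (ZMod.intCast_zmod_eq_zero_iff_dvd _ 2).mpr (by exact_mod_cast hc)
  have hdet : IsUnit ((X : Matrix (Fin 2) (Fin 2) ℤ).det) :=
    (Matrix.isUnit_iff_isUnit_det _).mp ⟨X, rfl⟩
  have hdet2 : (((X : Matrix (Fin 2) (Fin 2) ℤ).det : ℤ) : ZMod 2) = 1 := by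
    rcases Int.isUnit_iff.mp hdet with h | h <;> rw [h] <;> decide
  rw [Matrix.det_fin_two] at hdet2
  push_cast at hdet2
  rw [hb0, hc0, zero_mul, sub_zero] at hdet2
  obtain ⟨ha, hd⟩ := zmod2_mul_eq_one _ _ hdet2
  apply Units.ext
  rw [psi2_coe]
  ext i j
  fin_cases i <;> fin_cases j <;>
    simp [Matrix.map_apply, Matrix.one_apply, ha, hd, hb0, hc0]

lemma psi2_Ymat : psi2 Ymat = Yg := by
  apply Units.ext
  rw [psi2_coe]
  show (!![0,1;1,0] : Matrix (Fin 2) (Fin 2) ℤ).map _ = !![0,1;1,0]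
  ext i j
  fin_cases i <;> fin_cases j <;> simp [Matrix.map_apply]

/-- If `X` reduces to `1` mod 2 then `X ∈ Gamma2Set`. -/
lemma gamma2_of_psi2 {X : GL (Fin 2) ℤ} (hX : psi2 X = 1) : X ∈ Gamma2Set := by
  have h : ((X : Matrix (Fin 2) (Fin 2) ℤ).map (Int.cast : ℤ → ZMod 2)) =
      (1 : Matrix (Fin 2) (Fin 2) (ZMod 2)) := by
    rw [← psi2_coe, hX, Units.val_one]
  constructor
  · have h01 : (((X : Matrix (Fin 2) (Fin 2) ℤ) 0 1 : ℤ) : ZMod 2) = 0 :=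
      (congrFun (congrFun h 0) 1).trans (by simp [Matrix.one_apply])
    exact_mod_cast (ZMod.intCast_zmod_eq_zero_iff_dvd _ 2).mp h01
  · have h10 : (((X : Matrix (Fin 2) (Fin 2) ℤ) 1 0 : ℤ) : ZMod 2) = 0 :=
      (congrFun (congrFun h 1) 0).trans (by simp [Matrix.one_apply])
    exact_mod_cast (ZMod.intCast_zmod_eq_zero_iff_dvd _ 2).mp h10

/-- The key structural result: the group generated by `Γ(2)` and `Y` is the preimage of
`{1, Y}` under reduction mod 2. -/
lemma closure_eq :
    Subgroup.closure (Gamma2Set ∪ {Ymat}) = (Subgroup.zpowers Yg).comap psi2 := by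
  apply le_antisymm
  · rw [Subgroup.closure_le]
    rintro X (hX | hX)
    · simp only [Subgroup.coe_comap, Set.mem_preimage, SetLike.mem_coe]
      rw [psi2_of_gamma2 hX]
      exact one_mem _
    · simp only [Set.mem_singleton_iff] at hX
      subst hX
      simp only [Subgroup.coe_comap, Set.mem_preimage, SetLike.mem_coe]
      rw [psi2_Ymat]
      exact Subgroup.mem_zpowers Yg
  · intro X hX
    simp only [Subgroup.mem_comap] at hX
    rw [mem_zpowers_iff_of_sq Yg_sq] at hX
    have hY : Ymat ∈ Subgroup.closure (Gamma2Set ∪ {Ymat}) :=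
      Subgroup.subset_closure (Or.inr rfl)
    rcases hX with h1 | hY2
    · exact Subgroup.subset_closure (Or.inl (gamma2_of_psi2 h1))
    · have h1 : psi2 (X * Ymat) = 1 := by
        rw [_root_.map_mul, hY2, psi2_Ymat, Yg_sq]
      have hmem : X * Ymat ∈ Subgroup.closure (Gamma2Set ∪ {Ymat}) :=
        Subgroup.subset_closure (Or.inl (gamma2_of_psi2 h1))
      have hXeq : X = (X * Ymat) * Ymat⁻¹ := by group
      rw [hXeq]
      exact mul_mem hmem (inv_mem hY)

/-- Membership criterion for `Gamma2YPlus`. -/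
lemma mem_gamma2YPlus_iff (M : Matrix.SpecialLinearGroup (Fin 2) ℤ) :
    M ∈ Gamma2YPlus ↔
      (psi2 (Matrix.SpecialLinearGroup.toGL M) = 1 ∨
       psi2 (Matrix.SpecialLinearGroup.toGL M) = Yg) := by
  rw [Gamma2YPlus, Subgroup.mem_comap, closure_eq, Subgroup.mem_comap,
    mem_zpowers_iff_of_sq Yg_sq]

/-- The three coset representatives, reduced mod 2. -/
def vrep : Fin 3 → GL (Fin 2) (ZMod 2) :=
  ![1, ⟨!![1,1;0,1], !![1,1;0,1], by decide, by decide⟩,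
      ⟨!![1,1;1,0], !![0,1;1,1], by decide, by decide⟩]

theorem key : ∀ B : GL (Fin 2) (ZMod 2), ∃ i : Fin 3,
    (B * (vrep i)⁻¹ = 1 ∨ B * (vrep i)⁻¹ = Yg) ∧
    ∀ j : Fin 3, (B * (vrep j)⁻¹ = 1 ∨ B * (vrep j)⁻¹ = Yg) → j = i := by decide

lemma psi2_rep (i : Fin 3) :
    psi2 (Matrix.SpecialLinearGroup.toGL (![1, Tmat, Tmat * Smat] i)) = vrep i := by
  fin_cases i
  · show psi2 (Matrix.SpecialLinearGroup.toGL 1) = 1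
    rw [_root_.map_one, _root_.map_one]
  · apply Units.ext
    rw [psi2_coe]
    show (!![1,1;0,1] : Matrix (Fin 2) (Fin 2) ℤ).map _ = !![1,1;0,1]
    ext i j
    fin_cases i <;> fin_cases j <;> simp [Matrix.map_apply]
  · apply Units.ext
    rw [psi2_coe]
    have hTS : ((Tmat * Smat : Matrix.SpecialLinearGroup (Fin 2) ℤ) :
        Matrix (Fin 2) (Fin 2) ℤ) = !![1,-1;1,0] := by
      show ((Tmat : Matrix (Fin 2) (Fin 2) ℤ) * (Smat : Matrix (Fin 2) (Fin 2) ℤ)) = _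
      show (!![1,1;0,1] : Matrix (Fin 2) (Fin 2) ℤ) * !![0,-1;1,0] = _
      decide
    show ((Tmat * Smat : Matrix.SpecialLinearGroup (Fin 2) ℤ) :
        Matrix (Fin 2) (Fin 2) ℤ).map _ = !![1,1;1,0]
    rw [hTS]
    ext i j
    fin_cases i <;> fin_cases j <;> decide

/-- The index of `(Γ(2)·⟨Y⟩)⁺` in `SL(2, ℤ)` is exactly 3, with right-coset representatives
`Id`, `T = [[1,1],[0,1]]`, and `TS = [[1,-1],[1,0]]`. -/
theorem stmt8 :
    Gamma2YPlus.index = 3 ∧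
    ∀ A : Matrix.SpecialLinearGroup (Fin 2) ℤ,
      ∃! i : Fin 3, A * (![1, Tmat, Tmat * Smat] i)⁻¹ ∈ Gamma2YPlus := by
  have hmem : ∀ (A : Matrix.SpecialLinearGroup (Fin 2) ℤ) (i : Fin 3),
      A * (![1, Tmat, Tmat * Smat] i)⁻¹ ∈ Gamma2YPlus ↔
      (psi2 (Matrix.SpecialLinearGroup.toGL A) * (vrep i)⁻¹ = 1 ∨
       psi2 (Matrix.SpecialLinearGroup.toGL A) * (vrep i)⁻¹ = Yg) := by
    intro A i
    rw [mem_gamma2YPlus_iff, _root_.map_mul, _root_.map_mul, map_inv, map_inv, psi2_rep]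
  have h2 : ∀ A : Matrix.SpecialLinearGroup (Fin 2) ℤ,
      ∃! i : Fin 3, A * (![1, Tmat, Tmat * Smat] i)⁻¹ ∈ Gamma2YPlus := by
    intro A
    obtain ⟨i, hi, huniq⟩ := key (psi2 (Matrix.SpecialLinearGroup.toGL A))
    exact ⟨i, (hmem A i).mpr hi, fun j hj => huniq j ((hmem A j).mp hj)⟩
  refine ⟨?_, h2⟩
  -- the index equals the number of right cosets
  have hbij : Function.Bijective (fun i : Fin 3 =>
      (Quotient.mk (QuotientGroup.rightRel Gamma2YPlus) (![1, Tmat, Tmat * Smat] i))) := by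
    constructor
    · intro i j hij
      obtain ⟨k, hk, huniq⟩ := h2 (![1, Tmat, Tmat * Smat] j)
      have hrel : ![1, Tmat, Tmat * Smat] j * (![1, Tmat, Tmat * Smat] i)⁻¹ ∈ Gamma2YPlus :=
        QuotientGroup.rightRel_apply.mp (Quotient.exact hij)
      have hj : (![1, Tmat, Tmat * Smat] j) * (![1, Tmat, Tmat * Smat] j)⁻¹ ∈ Gamma2YPlus := by
        rw [mul_inv_cancel]; exact one_mem _
      rw [huniq j hj, huniq i hrel]
    · intro q
      induction q using Quotient.inductionOn with
      | h A =>
        obtain ⟨i, hi, -⟩ := h2 A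
        exact ⟨i, Quotient.sound (QuotientGroup.rightRel_apply.mpr hi)⟩
  have hcard : Nat.card (Quotient (QuotientGroup.rightRel Gamma2YPlus)) = 3 := by
    rw [← Nat.card_eq_of_bijective _ hbij, Nat.card_eq_fintype_card, Fintype.card_fin]
  rw [Subgroup.index, ← Nat.card_congr
    (QuotientGroup.quotientRightRelEquivQuotientLeftRel Gamma2YPlus), hcard]
end

section
/- Let A = [[R(π), 0],[0, Id₂]] ∈ GL(4,ℝ), i.e. A = diag(−1,−1,1,1). Then for X ∈ GL(4,ℝ), the matrix XᵗX commutes with A if and only if X has the form X = Q·[[B,0],[0,C]] for some Q ∈ O(4) and B, C ∈ GL(2,ℝ). Equivalently, writing X = (x₁ x₂ x₃ x₄) in columns, XᵗX commutes with A iff xᵢ ⊥ xⱼ for all i ∈ {1,2}, j ∈ {3,4}. -/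
open Matrix

/-- `A = diag(−1,−1,1,1)`, the holonomy generator of `O⁴₂`. -/
def Amat : Matrix (Fin 4) (Fin 4) ℝ :=
  !![-1, 0, 0, 0; 0, -1, 0, 0; 0, 0, 1, 0; 0, 0, 0, 1]

/-- The diagonal of `Amat`. -/
def dvec : Fin 4 → ℝ := ![-1, -1, 1, 1]

lemma Amat_eq_diagonal : Amat = Matrix.diagonal dvec := by
  ext i j
  fin_cases i <;> fin_cases j <;> simp [Amat, dvec, Matrix.diagonal, Matrix.vecHead, Matrix.vecTail]

lemma dvec_lt {i : Fin 4} (hi : (i : ℕ) < 2) : dvec i = -1 := by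
  fin_cases i <;> simp_all [dvec]

lemma dvec_ge {i : Fin 4} (hi : 2 ≤ (i : ℕ)) : dvec i = 1 := by
  fin_cases i <;> simp_all [dvec]

/-- A matrix commutes with `Amat` iff its "off-diagonal blocks" vanish. -/
lemma comm_Amat_iff (G : Matrix (Fin 4) (Fin 4) ℝ) :
    G * Amat = Amat * G ↔
      ∀ i j : Fin 4, (i : ℕ) < 2 → 2 ≤ (j : ℕ) → G i j = 0 ∧ G j i = 0 := by
  rw [Amat_eq_diagonal]
  constructor
  · intro h i j hi hj
    have h1 := congrFun (congrFun h i) j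
    have h2 := congrFun (congrFun h j) i
    rw [Matrix.mul_diagonal, Matrix.diagonal_mul] at h1 h2
    rw [dvec_lt hi, dvec_ge hj] at h1 h2
    constructor <;> linarith
  · intro h
    ext i j
    rw [Matrix.mul_diagonal, Matrix.diagonal_mul]
    rcases lt_or_ge (i : ℕ) 2 with hi | hi <;> rcases lt_or_ge (j : ℕ) 2 with hj | hj
    · rw [dvec_lt hi, dvec_lt hj]; ring
    · rw [(h i j hi hj).1]; ring
    · rw [(h j i hj hi).2]; ring
    · rw [dvec_ge hi, dvec_ge hj]; ring

lemma aux_posDef_transpose_mul_self (M : Matrix (Fin 4) (Fin 4) ℝ) (h : IsUnit M) :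
    (Mᵀ * M).PosDef := by
  refine Matrix.PosDef.of_dotProduct_mulVec_pos ?_ ?_
  · rw [← Matrix.conjTranspose_eq_transpose_of_trivial]
    exact Matrix.isHermitian_conjTranspose_mul_self M
  · intro x hx
    have hMx : M *ᵥ x ≠ 0 := by
      intro h0
      apply hx
      have hinj := Matrix.mulVec_injective_iff_isUnit.2 h
      have : M *ᵥ x = M *ᵥ 0 := by simpa using h0
      exact hinj this
    have key : star x ⬝ᵥ (Mᵀ * M) *ᵥ x = (M *ᵥ x) ⬝ᵥ (M *ᵥ x) := by
      rw [star_trivial, ← Matrix.mulVec_mulVec, Matrix.dotProduct_mulVec,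
        Matrix.vecMul_transpose]
    rw [key]
    refine lt_of_le_of_ne (Finset.sum_nonneg fun i _ => mul_self_nonneg _) ?_
    intro h0
    exact hMx (dotProduct_self_eq_zero.mp h0.symm)

lemma aux_posDef_submatrix {m n : Type*} [Fintype m] [Fintype n] [DecidableEq m] [DecidableEq n]
    {M : Matrix n n ℝ} (hM : M.PosDef) (e : m ≃ n) : (M.submatrix e e).PosDef := by
  refine Matrix.PosDef.of_dotProduct_mulVec_pos (hM.1.submatrix e) fun x hx => ?_
  have hxe : (x ∘ e.symm) ≠ 0 := by
    intro h0
    apply hx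
    ext i
    simpa using congrFun h0 (e i)
  have := hM.dotProduct_mulVec_pos hxe
  rw [Matrix.submatrix_mulVec_equiv]
  convert this using 1
  simp only [star_trivial, dotProduct, Function.comp_apply]
  exact Fintype.sum_equiv e _ _ fun i => by simp

lemma aux_posDef_blocks {H₁ H₂ : Matrix (Fin 2) (Fin 2) ℝ}
    (h : (Matrix.fromBlocks H₁ 0 0 H₂).PosDef) : H₁.PosDef ∧ H₂.PosDef := by
  have hherm := h.1
  rw [Matrix.IsHermitian, Matrix.fromBlocks_conjTranspose] at hherm
  constructor
  · refine Matrix.PosDef.of_dotProduct_mulVec_pos ?_ ?_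
    · have := congrArg Matrix.toBlocks₁₁ hherm
      simpa [Matrix.toBlocks_fromBlocks₁₁, Matrix.IsSymm] using this
    · intro x hx
      have hy : (Sum.elim x 0 : Fin 2 ⊕ Fin 2 → ℝ) ≠ 0 := by
        intro h0
        exact hx (funext fun i => congrFun h0 (Sum.inl i))
      have := h.dotProduct_mulVec_pos hy
      rw [Matrix.fromBlocks_mulVec] at this
      simpa [sumElim_dotProduct_sumElim] using this
  · refine Matrix.PosDef.of_dotProduct_mulVec_pos ?_ ?_
    · have := congrArg Matrix.toBlocks₂₂ hherm
      simpa [Matrix.toBlocks_fromBlocks₂₂, Matrix.IsSymm] using this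
    · intro x hx
      have hy : (Sum.elim 0 x : Fin 2 ⊕ Fin 2 → ℝ) ≠ 0 := by
        intro h0
        exact hx (funext fun i => congrFun h0 (Sum.inr i))
      have := h.dotProduct_mulVec_pos hy
      rw [Matrix.fromBlocks_mulVec] at this
      simpa [sumElim_dotProduct_sumElim] using this

/-- For `A = diag(−1,−1,1,1)` and `X ∈ GL(4,ℝ)`, the matrix `XᵗX` commutes with `A` if and
only if `X = Q·[[B,0],[0,C]]` with `Q ∈ O(4)`, `B, C ∈ GL(2,ℝ)`; equivalently, iff the first
two columns of `X` are orthogonal to the last two. -/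
theorem stmt13 (X : GL (Fin 4) ℝ) :
    (((X : Matrix (Fin 4) (Fin 4) ℝ)ᵀ * X) * Amat = Amat * ((X : Matrix (Fin 4) (Fin 4) ℝ)ᵀ * X) ↔
      ∃ Q ∈ Matrix.orthogonalGroup (Fin 4) ℝ, ∃ B C : GL (Fin 2) ℝ,
        (X : Matrix (Fin 4) (Fin 4) ℝ) =
          Q * Matrix.reindex (finSumFinEquiv : Fin 2 ⊕ Fin 2 ≃ Fin 4)
                (finSumFinEquiv : Fin 2 ⊕ Fin 2 ≃ Fin 4)
                (Matrix.fromBlocks (B : Matrix (Fin 2) (Fin 2) ℝ) 0 0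
                  (C : Matrix (Fin 2) (Fin 2) ℝ))) ∧
    (((X : Matrix (Fin 4) (Fin 4) ℝ)ᵀ * X) * Amat = Amat * ((X : Matrix (Fin 4) (Fin 4) ℝ)ᵀ * X) ↔
      ∀ i j : Fin 4, (i : ℕ) < 2 → 2 ≤ (j : ℕ) →
        (fun k => (X : Matrix (Fin 4) (Fin 4) ℝ) k i) ⬝ᵥ
          (fun k => (X : Matrix (Fin 4) (Fin 4) ℝ) k j) = 0) := by
  classical
  set M : Matrix (Fin 4) (Fin 4) ℝ := (X : Matrix (Fin 4) (Fin 4) ℝ) with hM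
  set G : Matrix (Fin 4) (Fin 4) ℝ := Mᵀ * M with hGdef
  set e : Fin 2 ⊕ Fin 2 ≃ Fin 4 := finSumFinEquiv with he
  have hMunit : IsUnit M := X.isUnit
  have hGsymm : ∀ i j, G i j = G j i := by
    intro i j
    have : Gᵀ = G := by
      rw [hGdef, Matrix.transpose_mul, Matrix.transpose_transpose]
    have := congrFun (congrFun this j) i
    simpa [Matrix.transpose_apply] using this
  have hdot : ∀ i j : Fin 4, (fun k => M k i) ⬝ᵥ (fun k => M k j) = G i j := by
    intro i j
    simp [hGdef, Matrix.mul_apply, dotProduct]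
  have hlt : ∀ a : Fin 2, ((e (Sum.inl a) : Fin 4) : ℕ) < 2 := by decide
  have hge : ∀ a : Fin 2, 2 ≤ ((e (Sum.inr a) : Fin 4) : ℕ) := by decide
  have hsym_lt : ∀ i : Fin 4, (i : ℕ) < 2 → ∃ a : Fin 2, e.symm i = Sum.inl a := by decide
  have hsym_ge : ∀ i : Fin 4, 2 ≤ (i : ℕ) → ∃ a : Fin 2, e.symm i = Sum.inr a := by decide
  constructor
  · -- first iff
    constructor
    · -- construct the decomposition
      intro hcomm
      have hzero := (comm_Amat_iff G).mp hcomm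
      have hG : G.PosDef := aux_posDef_transpose_mul_self M hMunit
      have hH : (G.submatrix e e).PosDef := aux_posDef_submatrix hG e
      set H : Matrix (Fin 2 ⊕ Fin 2) (Fin 2 ⊕ Fin 2) ℝ := G.submatrix e e with hHdef
      have hH12 : H.toBlocks₁₂ = 0 := by
        ext i j
        exact (hzero _ _ (hlt i) (hge j)).1
      have hH21 : H.toBlocks₂₁ = 0 := by
        ext i j
        exact (hzero _ _ (hlt j) (hge i)).2
      have hHblocks : H = Matrix.fromBlocks H.toBlocks₁₁ 0 0 H.toBlocks₂₂ := by
        conv_lhs => rw [← Matrix.fromBlocks_toBlocks H]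
        rw [hH12, hH21]
      have hHbd : (Matrix.fromBlocks H.toBlocks₁₁ 0 0 H.toBlocks₂₂).PosDef := hHblocks ▸ hH
      obtain ⟨hP₁, hP₂⟩ := aux_posDef_blocks hHbd
      open scoped MatrixOrder in
      set B : Matrix (Fin 2) (Fin 2) ℝ := CFC.sqrt H.toBlocks₁₁ with hBdef
      open scoped MatrixOrder in
      set C : Matrix (Fin 2) (Fin 2) ℝ := CFC.sqrt H.toBlocks₂₂ with hCdef
      open scoped MatrixOrder in
      have hBsq : B * B = H.toBlocks₁₁ := CFC.sqrt_mul_sqrt_self _ hP₁.posSemidef.nonneg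
      open scoped MatrixOrder in
      have hCsq : C * C = H.toBlocks₂₂ := CFC.sqrt_mul_sqrt_self _ hP₂.posSemidef.nonneg
      have hBsymm : Bᵀ = B := by
        rw [← Matrix.conjTranspose_eq_transpose_of_trivial]
        open scoped MatrixOrder in
        exact (CFC.sqrt_nonneg H.toBlocks₁₁).posSemidef.1
      have hCsymm : Cᵀ = C := by
        rw [← Matrix.conjTranspose_eq_transpose_of_trivial]
        open scoped MatrixOrder in
        exact (CFC.sqrt_nonneg H.toBlocks₂₂).posSemidef.1
      have hBdet : B.det ≠ 0 := by
        intro h0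
        have : H.toBlocks₁₁.det = 0 := by rw [← hBsq, Matrix.det_mul, h0, mul_zero]
        exact (ne_of_gt hP₁.det_pos) this
      have hCdet : C.det ≠ 0 := by
        intro h0
        have : H.toBlocks₂₂.det = 0 := by rw [← hCsq, Matrix.det_mul, h0, mul_zero]
        exact (ne_of_gt hP₂.det_pos) this
      set D : Matrix (Fin 4) (Fin 4) ℝ :=
        Matrix.reindex e e (Matrix.fromBlocks B 0 0 C) with hDdef
      have hDeq : D = (Matrix.fromBlocks B 0 0 C).submatrix e.symm e.symm := rfl
      have hDdet : IsUnit D.det := by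
        rw [hDeq, Matrix.det_submatrix_equiv_self, Matrix.det_fromBlocks_zero₁₂]
        exact (mul_ne_zero hBdet hCdet).isUnit
      have hDT : Dᵀ = D := by
        rw [hDeq, Matrix.transpose_submatrix, Matrix.fromBlocks_transpose, hBsymm, hCsymm]
        simp
      have hDtD : D * D = G := by
        rw [hDeq, Matrix.submatrix_mul_equiv, Matrix.fromBlocks_multiply]
        simp only [Matrix.mul_zero, Matrix.zero_mul, add_zero, zero_add, hBsq, hCsq]
        rw [← hHblocks, hHdef]
        simp [Matrix.submatrix_submatrix]
      refine ⟨M * D⁻¹, ?_, Matrix.GeneralLinearGroup.mkOfDetNeZero B hBdet,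
        Matrix.GeneralLinearGroup.mkOfDetNeZero C hCdet, ?_⟩
      · rw [Matrix.mem_orthogonalGroup_iff']
        have hstar : star (M * D⁻¹) = (M * D⁻¹)ᵀ := by
          rw [Matrix.star_eq_conjTranspose, Matrix.conjTranspose_eq_transpose_of_trivial]
        rw [Matrix.transpose_mul, Matrix.transpose_nonsing_inv, hDT]
        calc D⁻¹ * Mᵀ * (M * D⁻¹) = D⁻¹ * (Mᵀ * M) * D⁻¹ := by
              rw [Matrix.mul_assoc, Matrix.mul_assoc, Matrix.mul_assoc]
          _ = D⁻¹ * (D * D) * D⁻¹ := by rw [← hGdef, hDtD]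
          _ = (D⁻¹ * D) * (D * D⁻¹) := by
              rw [Matrix.mul_assoc, Matrix.mul_assoc, Matrix.mul_assoc]
          _ = 1 := by rw [Matrix.nonsing_inv_mul D hDdet, Matrix.mul_nonsing_inv D hDdet, one_mul]
      · have hcoe : (↑(Matrix.GeneralLinearGroup.mkOfDetNeZero B hBdet) :
            Matrix (Fin 2) (Fin 2) ℝ) = B := rfl
        have hcoe' : (↑(Matrix.GeneralLinearGroup.mkOfDetNeZero C hCdet) :
            Matrix (Fin 2) (Fin 2) ℝ) = C := rfl
        rw [hcoe, hcoe', ← hDdef, Matrix.mul_assoc, Matrix.nonsing_inv_mul D hDdet, mul_one]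
    · -- easy direction: decomposition implies commuting
      rintro ⟨Q, hQ, B, C, hX⟩
      rw [comm_Amat_iff]
      intro i j hi hj
      have hQtQ : Qᵀ * Q = 1 := by
        rw [Matrix.mem_orthogonalGroup_iff'] at hQ
        exact hQ
      set P : Matrix (Fin 4) (Fin 4) ℝ :=
        Matrix.reindex e e (Matrix.fromBlocks (B : Matrix (Fin 2) (Fin 2) ℝ) 0 0
          (C : Matrix (Fin 2) (Fin 2) ℝ)) with hPdef
      have hGP : G = Pᵀ * P := by
        rw [hGdef, hX]
        rw [Matrix.transpose_mul, Matrix.mul_assoc, ← Matrix.mul_assoc Qᵀ Q P, hQtQ, one_mul]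
      have hPtP : Pᵀ * P = Matrix.reindex e e
          (Matrix.fromBlocks ((B : Matrix (Fin 2) (Fin 2) ℝ)ᵀ * (B : Matrix (Fin 2) (Fin 2) ℝ))
            0 0 ((C : Matrix (Fin 2) (Fin 2) ℝ)ᵀ * (C : Matrix (Fin 2) (Fin 2) ℝ))) := by
        have : Pᵀ = (Matrix.fromBlocks ((B : Matrix (Fin 2) (Fin 2) ℝ))ᵀ 0 0
            ((C : Matrix (Fin 2) (Fin 2) ℝ))ᵀ).submatrix e.symm e.symm := by
          rw [hPdef]
          simp [Matrix.transpose_submatrix, Matrix.fromBlocks_transpose]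
        rw [this, hPdef]
        simp only [Matrix.reindex_apply, Matrix.submatrix_mul_equiv]
        rw [Matrix.fromBlocks_multiply]
        simp
      obtain ⟨a, ha⟩ := hsym_lt i hi
      obtain ⟨b, hb⟩ := hsym_ge j hj
      have key : ∀ (p q : Fin 4), (∃ a, e.symm p = Sum.inl a) → (∃ b, e.symm q = Sum.inr b) →
          G p q = 0 := by
        rintro p q ⟨a, ha⟩ ⟨b, hb⟩
        rw [hGP, hPtP]
        simp only [Matrix.reindex_apply, Matrix.submatrix_apply, ha, hb]
        simp
      refine ⟨key i j ⟨a, ha⟩ ⟨b, hb⟩, ?_⟩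
      rw [hGsymm]
      exact key i j ⟨a, ha⟩ ⟨b, hb⟩
  · -- second iff
    rw [comm_Amat_iff]
    constructor
    · intro h i j hi hj
      rw [hdot]
      exact (h i j hi hj).1
    · intro h i j hi hj
      have h1 := h i j hi hj
      rw [hdot] at h1
      exact ⟨h1, by rw [hGsymm]; exact h1⟩
end
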